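/- The reparameterization gradient identity for Gaussian expectations (Bonnet's theorem, one dimension): if f : ℝ → ℝ is continuously differentiable with f and f' of at most polynomial growth, and θ ∼ N(μ, σ²), then ∂/∂μ E[f(θ)] = E[f'(θ)]. -/

import Mathlib

open Real MeasureTheory ProbabilityTheory

lemma aux_int_pow_exp {b : ℝ} (hb : 0 < b) (k : ℕ) :
    Integrable fun u : ℝ => (1 + |u|) ^ k * Real.exp (-b * u ^ 2) := by
  have hI : Integrable fun u : ℝ => Real.exp (-(b/2) * u ^ 2) :=
    integrable_exp_neg_mul_sq (by linarith)
  refine Integrable.mono' (hI.const_mul ((k.factorial : ℝ) * Real.exp (1 + 1/(2*b)))) ?_ ?_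
  · exact (((continuous_const.add continuous_abs).pow k).mul
      ((continuous_const.mul (continuous_pow 2)).rexp)).aestronglyMeasurable
  · refine Filter.Eventually.of_forall fun u => ?_
    have h1 : (0:ℝ) ≤ 1 + |u| := by positivity
    have h2 : (1 + |u|) ^ k ≤ (k.factorial : ℝ) * Real.exp (1 + |u|) := by
      have := Real.pow_div_factorial_le_exp (x := 1 + |u|) h1 k
      have hfac : (0:ℝ) < (k.factorial : ℝ) := by positivity
      rw [div_le_iff₀ hfac] at this
      linarith [this]
    have h3 : Real.exp (1 + |u|) * Real.exp (-b * u ^ 2)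
        ≤ Real.exp (1 + 1/(2*b)) * Real.exp (-(b/2) * u ^ 2) := by
      rw [← Real.exp_add, ← Real.exp_add]
      apply Real.exp_le_exp.2
      obtain ⟨c, hbc⟩ : ∃ c : ℝ, 2 * b * c = 1 ∧ c = 1/(2*b) := ⟨1/(2*b), by field_simp, rfl⟩
      rw [← hbc.2, ← sq_abs u]
      nlinarith [sq_nonneg (b * |u| - 1), hb, hbc.1]
    have h0 : (0:ℝ) ≤ Real.exp (-b * u ^ 2) := (Real.exp_pos _).le
    rw [Real.norm_eq_abs, abs_mul, abs_of_nonneg (pow_nonneg h1 k), abs_of_nonneg h0]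
    calc (1 + |u|) ^ k * Real.exp (-b * u ^ 2)
        ≤ ((k.factorial : ℝ) * Real.exp (1 + |u|)) * Real.exp (-b * u ^ 2) :=
          mul_le_mul_of_nonneg_right h2 h0
      _ = (k.factorial : ℝ) * (Real.exp (1 + |u|) * Real.exp (-b * u ^ 2)) := by ring
      _ ≤ (k.factorial : ℝ) * (Real.exp (1 + 1/(2*b)) * Real.exp (-(b/2) * u ^ 2)) :=
          mul_le_mul_of_nonneg_left h3 (by positivity)
      _ = (k.factorial : ℝ) * Real.exp (1 + 1/(2*b)) * Real.exp (-(b/2) * u ^ 2) := by ring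

lemma aux_int_gauss {g : ℝ → ℝ} (hg : Continuous g) {C : ℝ} {k : ℕ}
    (hbound : ∀ x, |g x| ≤ C * (1 + |x|) ^ k) :
    Integrable g (gaussianReal 0 1) := by
  have hC : 0 ≤ C := by
    have := hbound 0
    simp at this
    linarith [abs_nonneg (g 0)]
  rw [gaussianReal_of_var_ne_zero _ one_ne_zero,
    integrable_withDensity_iff (measurable_gaussianPDF 0 1)
      (Filter.Eventually.of_forall fun x => ENNReal.ofReal_lt_top)]
  have hpdf : ∀ x : ℝ, ((gaussianPDF 0 1 x).toReal)
      = (Real.sqrt (2 * π))⁻¹ * Real.exp (-(1/2 : ℝ) * x ^ 2) := by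
    intro x
    rw [gaussianPDF, ENNReal.toReal_ofReal (gaussianPDFReal_nonneg _ _ _), gaussianPDFReal]
    norm_num
    exact Or.inl (by ring)
  have hInt := (aux_int_pow_exp (b := 1/2) (by norm_num) k).const_mul
      (C * (Real.sqrt (2 * π))⁻¹)
  refine Integrable.mono' hInt ?_ ?_
  · exact (hg.measurable.mul (measurable_gaussianPDF 0 1).ennreal_toReal).aestronglyMeasurable
  · refine Filter.Eventually.of_forall fun x => ?_
    rw [Real.norm_eq_abs, abs_mul, hpdf x]
    have hs : (0:ℝ) ≤ (Real.sqrt (2 * π))⁻¹ := by positivity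
    have he : (0:ℝ) ≤ Real.exp (-(1/2 : ℝ) * x ^ 2) := (Real.exp_pos _).le
    have h1 : (0:ℝ) ≤ (1 + |x|) ^ k := by positivity
    rw [abs_of_nonneg (mul_nonneg hs he)]
    calc |g x| * ((Real.sqrt (2 * π))⁻¹ * Real.exp (-(1/2 : ℝ) * x ^ 2))
        ≤ (C * (1 + |x|) ^ k) * ((Real.sqrt (2 * π))⁻¹ * Real.exp (-(1/2 : ℝ) * x ^ 2)) :=
          mul_le_mul_of_nonneg_right (hbound x) (mul_nonneg hs he)
      _ = C * (Real.sqrt (2 * π))⁻¹ * ((1 + |x|) ^ k * Real.exp (-(1/2 : ℝ) * x ^ 2)) := by ring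

lemma aux_map (σ : ℝ) (hσ : 0 < σ) (m : ℝ) :
    gaussianReal m (σ ^ 2).toNNReal
      = (gaussianReal 0 1).map (fun y => σ * y + m) := by
  have h1 : (gaussianReal 0 1).map (fun y => σ * y) = gaussianReal 0 (σ ^ 2).toNNReal := by
    have := gaussianReal_map_const_mul (μ := 0) (v := 1) σ
    rw [mul_zero] at this
    convert this using 2
    rw [NNReal.eq_iff]
    simp [Real.coe_toNNReal _ (sq_nonneg σ)]
  have h2 : (fun y : ℝ => σ * y + m) = (fun x : ℝ => x + m) ∘ (fun y => σ * y) := rfl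
  rw [h2, ← Measure.map_map (measurable_add_const m) (measurable_const_mul σ), h1,
    gaussianReal_map_add_const m, zero_add]

lemma aux_pow_bound {a s y : ℝ} (ha : 0 ≤ a) (hs : 0 ≤ s) (hsa : s ≤ a) (hy : 1 ≤ a) (k : ℕ) :
    (1 + |s * y|) ^ k ≤ (a * (1 + |y|)) ^ k := by
  apply pow_le_pow_left₀ (by positivity)
  have : |s * y| = s * |y| := by rw [abs_mul, abs_of_nonneg hs]
  rw [this]
  nlinarith [abs_nonneg y]

/-- Bonnet's theorem (reparameterization gradient identity) in
one dimension: if `f` is continuously differentiable with `f` and `f'` of at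
most polynomial growth, and `θ ∼ N(μ, σ²)`, then
`∂/∂μ E[f(θ)] = E[f'(θ)]`. -/
theorem stmt17 (f : ℝ → ℝ) (hf : ContDiff ℝ 1 f)
    (hf_growth : ∃ C k, ∀ x : ℝ, |f x| ≤ C * (1 + |x|) ^ k)
    (hf'_growth : ∃ C k, ∀ x : ℝ, |deriv f x| ≤ C * (1 + |x|) ^ k)
    (σ : ℝ) (hσ : 0 < σ) (μ : ℝ) :
    HasDerivAt (fun m : ℝ => ∫ x, f x ∂(gaussianReal m (σ ^ 2).toNNReal))
      (∫ x, deriv f x ∂(gaussianReal μ (σ ^ 2).toNNReal)) μ := by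
  obtain ⟨C, k, hCk⟩ := hf_growth
  obtain ⟨C', k', hCk'⟩ := hf'_growth
  have hC : 0 ≤ C := by have := hCk 0; simp at this; linarith [abs_nonneg (f 0)]
  have hC' : 0 ≤ C' := by have := hCk' 0; simp at this; linarith [abs_nonneg (deriv f 0)]
  have hfc : Continuous f := hf.continuous
  have hf'c : Continuous (deriv f) := hf.continuous_deriv le_rfl
  have hfd : Differentiable ℝ f := hf.differentiable one_ne_zero
  set ν := gaussianReal 0 1 with hν
  -- rewrite integrals via reparameterization
  have hrw : ∀ (g : ℝ → ℝ), Continuous g → ∀ m : ℝ,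
      ∫ x, g x ∂(gaussianReal m (σ ^ 2).toNNReal) = ∫ y, g (σ * y + m) ∂ν := by
    intro g hg m
    rw [aux_map σ hσ m,
      integral_map (by fun_prop) (hg.aestronglyMeasurable)]
  have hgoal_fun : (fun m : ℝ => ∫ x, f x ∂(gaussianReal m (σ ^ 2).toNNReal))
      = fun m : ℝ => ∫ y, f (σ * y + m) ∂ν := funext (hrw f hfc)
  rw [hgoal_fun, hrw (deriv f) hf'c μ]
  -- constants for bounds
  set A : ℝ := 1 + |μ| + σ with hA
  set B : ℝ := 2 + |μ| + σ with hB
  have hA1 : 1 ≤ A := by simp only [hA]; linarith [abs_nonneg μ]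
  have hB1 : 1 ≤ B := by simp only [hB]; linarith [abs_nonneg μ]
  have hmain := hasDerivAt_integral_of_dominated_loc_of_deriv_le (μ := ν) (x₀ := μ)
      (F := fun m y => f (σ * y + m)) (F' := fun m y => deriv f (σ * y + m))
      (bound := fun y => C' * B ^ k' * (1 + |y|) ^ k')
      (s := Metric.ball μ 1) (Metric.ball_mem_nhds μ one_pos)
      (Filter.Eventually.of_forall fun m =>
        (hfc.comp ((continuous_const.mul continuous_id).add continuous_const)).aestronglyMeasurable)
      ?_ ?_ ?_ ?_ ?_
  · exact hmain.2
  · -- integrability of F μ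
    refine aux_int_gauss (C := C * A ^ k) (k := k)
      (hfc.comp ((continuous_const.mul continuous_id).add continuous_const)) fun y => ?_
    calc |f (σ * y + μ)| ≤ C * (1 + |σ * y + μ|) ^ k := hCk _
      _ ≤ C * (A * (1 + |y|)) ^ k := by
          apply mul_le_mul_of_nonneg_left _ hC
          apply pow_le_pow_left₀ (by positivity)
          calc 1 + |σ * y + μ| ≤ 1 + (σ * |y| + |μ|) := by
                have := abs_add_le (σ * y) μ
                rw [abs_mul, abs_of_nonneg hσ.le] at this
                linarith
            _ ≤ A * (1 + |y|) := by simp only [hA]; nlinarith [abs_nonneg y, abs_nonneg μ]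
      _ = C * A ^ k * (1 + |y|) ^ k := by rw [mul_pow]; ring
  · exact (hf'c.comp ((continuous_const.mul continuous_id).add continuous_const)).aestronglyMeasurable
  · -- bound on F'
    refine Filter.Eventually.of_forall fun y => fun m hm => ?_
    have hm' : |m| ≤ |μ| + 1 := by
      rw [Metric.mem_ball, Real.dist_eq] at hm
      have := abs_sub_abs_le_abs_sub m μ
      linarith
    rw [Real.norm_eq_abs]
    calc |deriv f (σ * y + m)| ≤ C' * (1 + |σ * y + m|) ^ k' := hCk' _
      _ ≤ C' * (B * (1 + |y|)) ^ k' := by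
          apply mul_le_mul_of_nonneg_left _ hC'
          apply pow_le_pow_left₀ (by positivity)
          calc 1 + |σ * y + m| ≤ 1 + (σ * |y| + |m|) := by
                have := abs_add_le (σ * y) m
                rw [abs_mul, abs_of_nonneg hσ.le] at this
                linarith
            _ ≤ B * (1 + |y|) := by simp only [hB]; nlinarith [abs_nonneg y, abs_nonneg μ]
      _ = C' * B ^ k' * (1 + |y|) ^ k' := by rw [mul_pow]; ring
  · -- integrability of bound
    refine aux_int_gauss (C := C' * B ^ k') (k := k')
      ((continuous_const.mul ((continuous_const.add continuous_abs).pow k'))) fun y => ?_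
    rw [abs_mul, abs_of_nonneg (by positivity : (0:ℝ) ≤ (1 + |y|) ^ k'),
      abs_of_nonneg (by positivity : (0:ℝ) ≤ C' * B ^ k')]
  · -- differentiability
    refine Filter.Eventually.of_forall fun y => fun m _ => ?_
    have h1 : HasDerivAt (fun m : ℝ => σ * y + m) 1 m := (hasDerivAt_id m).const_add (σ * y)
    have h2 := (hfd (σ * y + m)).hasDerivAt.comp m h1
    simpa [Function.comp_def] using h2
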